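/- The Hankel determinant of the Catalan numbers satisfies det((C_{i+j})_{i,j=0}^{n-1}) = 1 for all n ≥ 1, where C_m = C(2m, m)/(m+1) is the m-th Catalan number. -/

import Mathlib

noncomputable def bb (n k : ℕ) : ℤ :=
  if k ≤ n then ((2*n).choose (n-k) : ℤ) - ((2*n).choose (n+k+1) : ℤ) else 0

lemma bb_zero {n k : ℕ} (h : n < k) : bb n k = 0 := by
  simp [bb, Nat.not_le.mpr h, h.not_ge]

lemma bb_diag (n : ℕ) : bb n n = 1 := by
  simp [bb, Nat.choose_eq_zero_of_lt (by omega : 2*n < n+n+1)]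

lemma pascal2 (m k : ℕ) : ((m+2).choose (k+2) : ℤ)
    = (m.choose k : ℤ) + 2 * m.choose (k+1) + m.choose (k+2) := by
  rw [Nat.choose_succ_succ (m+1) (k+1), Nat.choose_succ_succ m k, Nat.choose_succ_succ m (k+1)]
  push_cast; ring

lemma bb_rec0 (n : ℕ) : bb (n+1) 0 = bb n 0 + bb n 1 := by
  match n with
  | 0 => simp [bb]
  | m+1 =>
    simp only [bb, if_pos (by omega : (0:ℕ) ≤ m+1+1), if_pos (by omega : (0:ℕ) ≤ m+1),
      if_pos (by omega : (1:ℕ) ≤ m+1)]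
    rw [show m+1+1-0 = m+2 by omega, show m+1-0 = m+1 by omega, show m+1-1 = m by omega,
      show 2*(m+1+1) = 2*m+2+2 by ring, show 2*(m+1) = 2*m+2 by ring,
      show m+1+1+0+1 = (m+1)+2 by omega, show m+1+0+1 = m+2 by omega,
      show m+1+1+1 = m+3 by omega]
    rw [pascal2 (2*m+2) m, pascal2 (2*m+2) (m+1),
      show m+1+2 = m+3 by omega, show m+1+1 = m+2 by omega]
    ring

lemma bb_rec1 (n k : ℕ) : bb (n+1) (k+1) = bb n k + 2 * bb n (k+1) + bb n (k+2) := by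
  rcases lt_or_ge n k with h | h
  · rw [bb_zero h, bb_zero (show n < k+1 by omega), bb_zero (show n < k+2 by omega),
      bb_zero (show n+1 < k+1 by omega)]
    ring
  rcases eq_or_lt_of_le h with rfl | h1
  · -- n = k
    rw [bb_diag, bb_diag, bb_zero (show k < k+1 by omega), bb_zero (show k < k+2 by omega)]
    ring
  rcases eq_or_lt_of_le (by omega : k + 1 ≤ n) with h2 | h2
  · -- n = k+1
    subst h2
    rw [bb_diag (k+1), bb_zero (show k+1 < k+2 by omega)]
    simp only [bb, if_pos (by omega : k+1 ≤ k+1+1), if_pos (by omega : k ≤ k+1)]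
    rw [show k+1+1-(k+1) = 1 by omega, show k+1-k = 1 by omega,
      show 2*(k+1+1) = 2*k+4 by ring, show 2*(k+1) = 2*k+2 by ring,
      show k+1+1+(k+1)+1 = 2*k+4 by omega, show k+1+k+1 = 2*k+2 by omega]
    simp [Nat.choose_one_right, Nat.choose_self, Nat.choose_eq_zero_of_lt]
    ring
  · -- k+2 ≤ n
    obtain ⟨a, rfl⟩ : ∃ a, n = k+2+a := ⟨n-(k+2), by omega⟩
    simp only [bb, if_pos (by omega : k+1 ≤ k+2+a+1), if_pos (by omega : k ≤ k+2+a),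
      if_pos (by omega : k+1 ≤ k+2+a), if_pos (by omega : k+2 ≤ k+2+a)]
    rw [show k+2+a+1-(k+1) = a+2 by omega, show k+2+a-k = a+2 by omega,
      show k+2+a-(k+1) = a+1 by omega, show k+2+a-(k+2) = a by omega,
      show 2*(k+2+a+1) = (2*k+2*a+4)+2 by ring, show 2*(k+2+a) = 2*k+2*a+4 by ring,
      show k+2+a+1+(k+1)+1 = (2*k+a+3)+2 by omega, show k+2+a+k+1 = 2*k+a+3 by omega,
      show k+2+a+(k+1)+1 = (2*k+a+3)+1 by omega, show k+2+a+(k+2)+1 = (2*k+a+3)+2 by omega]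
    rw [pascal2 (2*k+2*a+4) a, pascal2 (2*k+2*a+4) (2*k+a+3)]
    ring

lemma bb_zero_eq (n : ℕ) : bb n 0 = ((2*n).choose n : ℤ) - ((2*n).choose (n+1) : ℤ) := by
  simp [bb]

lemma bb_catalan (n : ℕ) : bb n 0 = (catalan n : ℤ) := by
  have key : ((2*n).choose (n+1)) * (n+1) = (2*n).choose n * n := by
    have := Nat.choose_succ_right_eq (2*n) n
    rwa [show 2*n - n = n by omega] at this
  have hc : (n + 1) * catalan n = (2*n).choose n := succ_mul_catalan_eq_centralBinom n
  have h1 : ((n:ℤ)+1) ≠ 0 := by positivity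
  apply mul_left_cancel₀ h1
  rw [bb_zero_eq]
  have := congrArg (Nat.cast : ℕ → ℤ) key
  have := congrArg (Nat.cast : ℕ → ℤ) hc
  push_cast at *
  linarith

lemma shift (N i j : ℕ) (hN : i + 1 ≤ N) :
    ∑ k ∈ Finset.range (N+1), bb (i+1) k * bb j k
      = ∑ k ∈ Finset.range (N+1), bb i k * bb (j+1) k := by
  rw [Finset.sum_range_succ' (fun k => bb (i+1) k * bb j k) N,
      Finset.sum_range_succ' (fun k => bb i k * bb (j+1) k) N]
  simp only [bb_rec1, bb_rec0]
  have hbN : bb i N = 0 := bb_zero (by omega)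
  have hbN1 : bb i (N+1) = 0 := bb_zero (by omega)
  have h2 : (∑ k ∈ Finset.range N, (bb i k + 2 * bb i (k+1) + bb i (k+2)) * bb j (k+1))
      - (∑ k ∈ Finset.range N, bb i (k+1) * (bb j k + 2 * bb j (k+1) + bb j (k+2)))
      = (bb i 0 * bb j 1 - bb i 1 * bb j 0) - (bb i N * bb j (N+1) - bb i (N+1) * bb j N) := by
    rw [← Finset.sum_sub_distrib]
    rw [Finset.sum_congr rfl (fun k _ => by ring :
      ∀ k ∈ Finset.range N,
        (bb i k + 2 * bb i (k+1) + bb i (k+2)) * bb j (k+1)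
          - bb i (k+1) * (bb j k + 2 * bb j (k+1) + bb j (k+2))
        = (bb i k * bb j (k+1) - bb i (k+1) * bb j k)
          - (bb i (k+1) * bb j (k+2) - bb i (k+2) * bb j (k+1)))]
    exact Finset.sum_range_sub' (fun k => bb i k * bb j (k+1) - bb i (k+1) * bb j k) N
  rw [hbN, hbN1] at h2
  linear_combination h2

lemma bb_tail (i M N : ℕ) (h : i < M) (h2 : M ≤ N) (j : ℕ) :
    ∑ k ∈ Finset.range N, bb i k * bb j k = ∑ k ∈ Finset.range M, bb i k * bb j k := by
  symm
  apply Finset.sum_subset (Finset.range_subset_range.mpr h2)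
  intro k _ hk
  rw [bb_zero (show i < k by simp at hk; omega), zero_mul]

lemma conv (i j : ℕ) : ∑ k ∈ Finset.range (i+j+2), bb i k * bb j k = (catalan (i+j) : ℤ) := by
  induction i generalizing j with
  | zero =>
    rw [bb_tail 0 1 (0+j+2) (by omega) (by omega)]
    simp [Finset.sum_range_one, bb_diag, bb_catalan]
  | succ i ih =>
    have e1 : i+1+j+2 = (i+j+2)+1 := by omega
    rw [e1, shift (i+j+2) i j (by omega)]
    rw [bb_tail i (i+1) ((i+j+2)+1) (by omega) (by omega),
        ← bb_tail i (i+1) (i+(j+1)+2) (by omega) (by omega)]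
    rw [ih (j+1), show i+(j+1) = i+1+j by omega]

lemma conv' (n i j : ℕ) (hi : i < n) :
    ∑ k ∈ Finset.range n, bb i k * bb j k = (catalan (i+j) : ℤ) := by
  rw [bb_tail i (i+1) n (by omega) (by omega),
      ← bb_tail i (i+1) (i+j+2) (by omega) (by omega)]
  exact conv i j

theorem stmt_8 (n : ℕ) (hn : 1 ≤ n) :
    Matrix.det (Matrix.of (fun i j : Fin n => (catalan (i.1 + j.1) : ℤ))) = 1 := by
  set L : Matrix (Fin n) (Fin n) ℤ := Matrix.of (fun i k : Fin n => bb i.1 k.1) with hL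
  have hfact : Matrix.of (fun i j : Fin n => (catalan (i.1 + j.1) : ℤ)) = L * L.transpose := by
    ext i j
    simp only [Matrix.mul_apply, Matrix.transpose_apply, hL, Matrix.of_apply]
    rw [Fin.sum_univ_eq_sum_range (fun k => bb i.1 k * bb j.1 k) n]
    exact (conv' n i.1 j.1 i.2).symm
  have hdetL : L.det = 1 := by
    rw [Matrix.det_of_lowerTriangular L (fun i j hij => by
      exact bb_zero (show i.1 < j.1 from hij))]
    simp only [hL, Matrix.of_apply, bb_diag]
    simp
  rw [hfact, Matrix.det_mul, Matrix.det_transpose, hdetL]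
  norm_num
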